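/- For every t ∈ (1,2), every p ∈ ℕ with p ≥ 1, and every R > 0, there exists a constant D = D(R,p,t) such that for every p-periodic potential V : ℤ → ℝ with ‖V‖_∞ ≤ R, one has ∫_{{E ∈ ℝ : |Δ(E)| < 2}} ( |Δ′(E)| / (p · √(4 − Δ(E)²)) )^t dE ≤ D, where Δ is the discriminant of V and Δ′ its derivative. (The integrand is the t-th power of |dk/dE|, where k is the Floquet quasimomentum determined by Δ(E) = 2cos(kp).) -/

import Mathlib

open MeasureTheory

/-- The transfer matrix over `n` sites: `T_n^{(E,V)} = S_{n-1} ⋯ S_0`, where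
`S_i^{(E,V)} = !![E - V i, -1; 1, 0]`. -/
def transferMatrix (E : ℝ) (V : ℤ → ℝ) : ℕ → Matrix (Fin 2) (Fin 2) ℝ
  | 0 => 1
  | n + 1 => !![E - V n, -1; 1, 0] * transferMatrix E V n

/-- The discriminant `Δ(E) = tr T_p^{(E,V)}` of a `p`-periodic potential. -/
def discriminant (V : ℤ → ℝ) (p : ℕ) (E : ℝ) : ℝ :=
  (transferMatrix E V p).trace

open Polynomial Set

noncomputable def polyTM (V : ℤ → ℝ) : ℕ → Matrix (Fin 2) (Fin 2) (Polynomial ℝ)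
  | 0 => 1
  | n + 1 => !![X - C (V n), -1; 1, 0] * polyTM V n

lemma polyTM_eval (V : ℤ → ℝ) (E : ℝ) : ∀ n (i j : Fin 2),
    (polyTM V n i j).eval E = transferMatrix E V n i j := by
  intro n
  induction n with
  | zero =>
    intro i j
    fin_cases i <;> fin_cases j <;>
      simp [polyTM, transferMatrix, Matrix.one_apply]
  | succ n ih =>
    intro i j
    simp only [polyTM, transferMatrix, Matrix.mul_apply, Fin.sum_univ_two]
    fin_cases i <;> simp [ih]

lemma discriminant_eval (V : ℤ → ℝ) (p : ℕ) (E : ℝ) :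
    discriminant V p E = ((polyTM V p).trace).eval E := by
  rw [discriminant, Matrix.trace_fin_two, Matrix.trace_fin_two, eval_add,
    polyTM_eval, polyTM_eval]

lemma polyTM_succ_00 (V : ℤ → ℝ) (n : ℕ) :
    polyTM V (n+1) 0 0 = (X - C (V n)) * polyTM V n 0 0 + (-1) * polyTM V n 1 0 := by
  simp only [polyTM, Matrix.mul_apply, Fin.sum_univ_two]; simp

lemma polyTM_succ_01 (V : ℤ → ℝ) (n : ℕ) :
    polyTM V (n+1) 0 1 = (X - C (V n)) * polyTM V n 0 1 + (-1) * polyTM V n 1 1 := by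
  simp only [polyTM, Matrix.mul_apply, Fin.sum_univ_two]; simp

lemma polyTM_succ_10 (V : ℤ → ℝ) (n : ℕ) : polyTM V (n+1) 1 0 = polyTM V n 0 0 := by
  simp only [polyTM, Matrix.mul_apply, Fin.sum_univ_two]; simp

lemma polyTM_succ_11 (V : ℤ → ℝ) (n : ℕ) : polyTM V (n+1) 1 1 = polyTM V n 0 1 := by
  simp only [polyTM, Matrix.mul_apply, Fin.sum_univ_two]; simp

lemma lin_coeff_bound {v B C' : ℝ} {q r : ℝ[X]} (hv : |v| ≤ C') (hC : 0 ≤ C')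
    (hq : ∀ i, |q.coeff i| ≤ B) (hr : ∀ i, |r.coeff i| ≤ B) (i : ℕ) :
    |((X - C v) * q + (-1) * r).coeff i| ≤ (2 + C') * B := by
  have hB : 0 ≤ B := le_trans (abs_nonneg _) (hq 0)
  have hXq : |(X * q).coeff i| ≤ B := by
    cases i with
    | zero => simp [hB]
    | succ j => rw [coeff_X_mul]; exact hq j
  have h1 : ((X - C v) * q + (-1) * r).coeff i
      = (X * q).coeff i - v * q.coeff i - r.coeff i := by
    rw [sub_mul, neg_one_mul, coeff_add, coeff_sub, coeff_C_mul, coeff_neg]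
    ring
  rw [h1]
  have h2 : |v * q.coeff i| ≤ C' * B := by
    rw [abs_mul]
    exact mul_le_mul hv (hq i) (abs_nonneg _) hC
  calc |(X * q).coeff i - v * q.coeff i - r.coeff i|
      ≤ |(X * q).coeff i - v * q.coeff i| + |r.coeff i| := abs_sub _ _
    _ ≤ (|(X * q).coeff i| + |v * q.coeff i|) + |r.coeff i| :=
        add_le_add (abs_sub _ _) le_rfl
    _ ≤ (B + C' * B) + B := add_le_add (add_le_add hXq h2) (hr i)
    _ = (2 + C') * B := by ring

lemma polyTM_coeff_bound (V : ℤ → ℝ) {R : ℝ} (hR : 0 ≤ R) (hbd : ∀ m : ℤ, |V m| ≤ R) :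
    ∀ n (k l : Fin 2) (i : ℕ), |(polyTM V n k l).coeff i| ≤ (2 + R) ^ n := by
  intro n
  induction n with
  | zero =>
    intro k l i
    fin_cases k <;> fin_cases l <;>
      · simp only [polyTM, Matrix.one_apply, pow_zero, Fin.zero_eta, Fin.mk_one]
        split_ifs <;> simp [coeff_one] <;> split_ifs <;> norm_num
  | succ n ih =>
    intro k l i
    have hone : (1:ℝ) ≤ 2 + R := by linarith
    have hB : (0:ℝ) ≤ (2+R)^n := by positivity
    have hstep : (2+R)^n ≤ (2+R)^(n+1) := by
      calc (2+R)^n = 1 * (2+R)^n := (one_mul _).symm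
        _ ≤ (2+R) * (2+R)^n := by gcongr
        _ = (2+R)^(n+1) := by ring
    fin_cases k <;> fin_cases l <;> simp only [Fin.zero_eta, Fin.mk_one]
    · rw [polyTM_succ_00, pow_succ, mul_comm ((2+R)^n)]
      exact lin_coeff_bound (hbd n) hR (ih 0 0) (ih 1 0) i
    · rw [polyTM_succ_01, pow_succ, mul_comm ((2+R)^n)]
      exact lin_coeff_bound (hbd n) hR (ih 0 1) (ih 1 1) i
    · rw [polyTM_succ_10]; exact le_trans (ih 0 0 i) hstep
    · rw [polyTM_succ_11]; exact le_trans (ih 0 1 i) hstep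

section
variable (V : ℤ → ℝ)
lemma polyTM_deg : ∀ n : ℕ, 1 ≤ n →
    (polyTM V n 0 0).Monic ∧ (polyTM V n 0 0).degree = (n : WithBot ℕ) ∧
    (polyTM V n 0 1).degree < (n : WithBot ℕ) ∧ (polyTM V n 1 0).degree < (n : WithBot ℕ) ∧
    (polyTM V n 1 1).degree < (n : WithBot ℕ) := by
  intro n
  induction n with
  | zero => omega
  | succ n ih =>
    intro _
    rcases Nat.eq_or_lt_of_le (Nat.zero_le n) with h0 | h1
    · -- n = 0
      subst h0
      refine ⟨?_, ?_, ?_, ?_, ?_⟩ <;>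
        simp [polyTM_succ_00, polyTM_succ_01, polyTM_succ_10, polyTM_succ_11, polyTM,
          Matrix.one_apply, monic_X_sub_C, degree_X_sub_C]
    · have hn : 1 ≤ n := h1
      obtain ⟨hmon, hdeg, hb, hc, hd⟩ := ih hn
      have hsucc : (n : WithBot ℕ) < ((n+1 : ℕ) : WithBot ℕ) := by
        exact_mod_cast Nat.lt_succ_self n
      have haddone : (1 : WithBot ℕ) + (n : WithBot ℕ) = ((n+1 : ℕ) : WithBot ℕ) := by
        norm_cast; omega
      have hXa : ((X - C (V n)) * polyTM V n 0 0).Monic := (monic_X_sub_C _).mul hmon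
      have hXadeg : ((X - C (V n)) * polyTM V n 0 0).degree = ((n+1 : ℕ) : WithBot ℕ) := by
        rw [degree_mul, degree_X_sub_C, hdeg, haddone]
      have hneg : ((-1 : ℝ[X]) * polyTM V n 1 0).degree < ((n+1 : ℕ) : WithBot ℕ) := by
        rw [neg_one_mul, degree_neg]
        exact lt_trans hc hsucc
      have hlt : ((-1 : ℝ[X]) * polyTM V n 1 0).degree < ((X - C (V n)) * polyTM V n 0 0).degree := by
        rw [hXadeg]; exact hneg
      refine ⟨?_, ?_, ?_, ?_, ?_⟩
      · rw [polyTM_succ_00]; exact hXa.add_of_left hlt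
      · rw [polyTM_succ_00, degree_add_eq_left_of_degree_lt hlt, hXadeg]
      · rw [polyTM_succ_01]
        refine lt_of_le_of_lt (degree_add_le _ _) (max_lt ?_ ?_)
        · rw [degree_mul, degree_X_sub_C, ← haddone]
          exact WithBot.add_lt_add_left (by simp) hb
        · rw [neg_one_mul, degree_neg]
          exact lt_trans hd hsucc
      · rw [polyTM_succ_10, hdeg]
        exact hsucc
      · rw [polyTM_succ_11]
        exact lt_trans hb hsucc

end


lemma eval_abs_le {q : ℝ[X]} {B K : ℝ} {d : ℕ} (hB : ∀ i, |q.coeff i| ≤ B)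
    (hd : q.natDegree ≤ d) (hK : 1 ≤ K) {x : ℝ} (hx : |x| ≤ K) :
    |q.eval x| ≤ (d + 1) * B * K ^ d := by
  have hB0 : 0 ≤ B := le_trans (abs_nonneg _) (hB 0)
  have hK0 : 0 ≤ K := le_trans zero_le_one hK
  rw [eval_eq_sum_range]
  calc |∑ i ∈ Finset.range (q.natDegree + 1), q.coeff i * x ^ i|
      ≤ ∑ i ∈ Finset.range (q.natDegree + 1), |q.coeff i * x ^ i| :=
        Finset.abs_sum_le_sum_abs _ _
    _ ≤ ∑ _i ∈ Finset.range (q.natDegree + 1), B * K ^ d := by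
        refine Finset.sum_le_sum fun i hi => ?_
        rw [abs_mul, abs_pow]
        have h1 : |x| ^ i ≤ K ^ i := pow_le_pow_left₀ (abs_nonneg _) hx i
        have h2 : K ^ i ≤ K ^ d := by
          refine pow_le_pow_right₀ hK ?_
          have := Finset.mem_range.mp hi
          omega
        exact mul_le_mul (hB i) (le_trans h1 h2) (by positivity) hB0
    _ = (q.natDegree + 1) * (B * K ^ d) := by
        rw [Finset.sum_const, Finset.card_range, nsmul_eq_mul]; push_cast; ring
    _ ≤ (d + 1) * (B * K ^ d) := by
        have : (q.natDegree : ℝ) + 1 ≤ (d : ℝ) + 1 := by exact_mod_cast Nat.succ_le_succ hd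
        exact mul_le_mul_of_nonneg_right this (by positivity)
    _ = (d + 1) * B * K ^ d := by ring

lemma eval_lower {P : ℝ[X]} {B : ℝ} {p : ℕ} (hp : 1 ≤ p) (hm : P.Monic)
    (hdeg : P.natDegree = p) (hB : ∀ i, |P.coeff i| ≤ B) {x : ℝ}
    (hx : (p : ℝ) * B + 5 ≤ |x|) : 2 < |P.eval x| := by
  have hB0 : 0 ≤ B := le_trans (abs_nonneg _) (hB 0)
  have hx1 : (1:ℝ) ≤ |x| := by
    have : (0:ℝ) ≤ (p:ℝ) * B := by positivity
    linarith
  have hx0 : (0:ℝ) ≤ |x| := by linarith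
  have hcoeffp : P.coeff p = 1 := by rw [← hdeg]; exact hm.coeff_natDegree
  have hev : P.eval x = (∑ i ∈ Finset.range p, P.coeff i * x ^ i) + x ^ p := by
    rw [eval_eq_sum_range, hdeg, Finset.sum_range_succ, hcoeffp, one_mul]
  have hsum : |∑ i ∈ Finset.range p, P.coeff i * x ^ i| ≤ (p : ℝ) * B * |x| ^ (p-1) := by
    calc |∑ i ∈ Finset.range p, P.coeff i * x ^ i|
        ≤ ∑ i ∈ Finset.range p, |P.coeff i * x ^ i| := Finset.abs_sum_le_sum_abs _ _
      _ ≤ ∑ _i ∈ Finset.range p, B * |x| ^ (p-1) := by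
          refine Finset.sum_le_sum fun i hi => ?_
          rw [abs_mul, abs_pow]
          have h1 : |x| ^ i ≤ |x| ^ (p-1) := by
            refine pow_le_pow_right₀ hx1 ?_
            have := Finset.mem_range.mp hi
            omega
          exact mul_le_mul (hB i) h1 (by positivity) hB0
      _ = (p : ℝ) * (B * |x| ^ (p-1)) := by
          rw [Finset.sum_const, Finset.card_range, nsmul_eq_mul]
      _ = (p : ℝ) * B * |x| ^ (p-1) := by ring
  have hxp : |x| ^ p = |x| ^ (p-1) * |x| := by
    conv_lhs => rw [show p = (p-1) + 1 by omega]
    rw [pow_succ]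
  have hpow1 : (1:ℝ) ≤ |x| ^ (p-1) := one_le_pow₀ hx1
  have h5 : (5:ℝ) ≤ |x| - (p:ℝ) * B := by linarith
  have key : (p:ℝ) * B + 2 < |x| ^ p - (p : ℝ) * B * |x| ^ (p-1) + (p:ℝ)*B := by
      have h6 : |x| ^ p - (p : ℝ) * B * |x| ^ (p-1) = |x| ^ (p-1) * (|x| - (p:ℝ)*B) := by
        rw [hxp]; ring
      have h7 : (5:ℝ) ≤ |x| ^ (p-1) * (|x| - (p:ℝ)*B) := by
        calc (5:ℝ) = 1 * 5 := by norm_num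
          _ ≤ |x| ^ (p-1) * (|x| - (p:ℝ)*B) := by
              apply mul_le_mul hpow1 h5 (by norm_num) (by positivity)
      nlinarith
  have habs : |x| ^ p - |∑ i ∈ Finset.range p, P.coeff i * x ^ i| ≤ |P.eval x| := by
    rw [hev]
    have h8 : |x ^ p| = |x| ^ p := abs_pow x p
    have h9 := abs_sub_abs_le_abs_sub (x ^ p) (-(∑ i ∈ Finset.range p, P.coeff i * x ^ i))
    rw [abs_neg, sub_neg_eq_add, add_comm] at h9
    rw [h8] at h9
    exact le_trans (by linarith [hsum]) h9
  nlinarith [hsum]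


lemma key0 (P : ℝ[X]) (g : ℝ → ENNReal) (U : Set ℝ) (hU : Convex ℝ U)
    (hUm : MeasurableSet U) (hne : ∀ x ∈ U, (derivative P).eval x ≠ 0) :
    ∫⁻ x in U ∩ {E : ℝ | P.eval E ∈ Set.Ioo (-2:ℝ) 2},
        ENNReal.ofReal |(derivative P).eval x| * g (P.eval x)
      ≤ ∫⁻ y in Set.Ioo (-2:ℝ) 2, g y := by
  set s : Set ℝ := {E : ℝ | P.eval E ∈ Set.Ioo (-2:ℝ) 2} with hs
  have hsopen : IsOpen s := isOpen_Ioo.preimage P.continuous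
  have hA : MeasurableSet (U ∩ s) := hUm.inter hsopen.measurableSet
  have hinj : Set.InjOn (fun x => P.eval x) (U ∩ s) := by
    intro x hx y hy hxy
    by_contra hxyne
    rcases lt_or_gt_of_ne hxyne with h | h
    · obtain ⟨c, hc, hc0⟩ := exists_deriv_eq_zero h
        (P.continuousOn (s := Set.Icc x y)) hxy
      have hcU : c ∈ U := hU.ordConnected.out hx.1 hy.1 ⟨hc.1.le, hc.2.le⟩
      rw [Polynomial.deriv] at hc0
      exact hne c hcU hc0
    · obtain ⟨c, hc, hc0⟩ := exists_deriv_eq_zero h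
        (P.continuousOn (s := Set.Icc y x)) hxy.symm
      have hcU : c ∈ U := hU.ordConnected.out hy.1 hx.1 ⟨hc.1.le, hc.2.le⟩
      rw [Polynomial.deriv] at hc0
      exact hne c hcU hc0
  have hder : ∀ x ∈ U ∩ s, HasFDerivWithinAt (fun x => P.eval x)
      (ContinuousLinearMap.smulRight (1 : ℝ →L[ℝ] ℝ) ((derivative P).eval x)) (U ∩ s) x :=
    fun x _ => (P.hasDerivAt x).hasDerivWithinAt.hasFDerivWithinAt
  have hcv := lintegral_image_eq_lintegral_abs_det_fderiv_mul volume hA hder hinj g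
  simp only [ContinuousLinearMap.smulRight_one_eq_toSpanSingleton, ContinuousLinearMap.det_toSpanSingleton] at hcv
  calc ∫⁻ x in U ∩ s, ENNReal.ofReal |(derivative P).eval x| * g (P.eval x)
      = ∫⁻ y in (fun x => P.eval x) '' (U ∩ s), g y := hcv.symm
    _ ≤ ∫⁻ y in Set.Ioo (-2:ℝ) 2, g y := by
        refine lintegral_mono_set ?_
        rintro _ ⟨x, hx, rfl⟩
        exact hx.2

lemma key (P : ℝ[X]) (g : ℝ → ENNReal) : ∀ (n : ℕ) (F : Finset ℝ), F.card ≤ n →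
    ∀ U : Set ℝ, Convex ℝ U → MeasurableSet U →
    (∀ x ∈ U, x ∉ F → (derivative P).eval x ≠ 0) →
    ∫⁻ x in U ∩ {E : ℝ | P.eval E ∈ Set.Ioo (-2:ℝ) 2},
        ENNReal.ofReal |(derivative P).eval x| * g (P.eval x)
      ≤ (n + 1) * ∫⁻ y in Set.Ioo (-2:ℝ) 2, g y := by
  intro n
  induction n with
  | zero =>
    intro F hF U hU hUm hne
    have hFe : F = ∅ := Finset.card_eq_zero.mp (Nat.le_zero.mp hF)
    subst hFe
    simpa using key0 P g U hU hUm (fun x hx => hne x hx (Finset.notMem_empty x))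
  | succ n ih =>
    intro F hF U hU hUm hne
    rcases F.eq_empty_or_nonempty with hFe | hFne
    · subst hFe
      refine le_trans (key0 P g U hU hUm (fun x hx => hne x hx (Finset.notMem_empty x))) ?_
      conv_lhs => rw [← one_mul (∫⁻ y in Set.Ioo (-2:ℝ) 2, g y)]
      exact mul_le_mul_left le_add_self _
    · set r := F.max' hFne with hr
      set s : Set ℝ := {E : ℝ | P.eval E ∈ Set.Ioo (-2:ℝ) 2} with hs
      have hsplit : U ∩ s ⊆ ((U ∩ Set.Iio r) ∩ s) ∪ (((U ∩ Set.Ioi r) ∩ s) ∪ {r}) := by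
        intro x hx
        rcases lt_trichotomy x r with h | h | h
        · exact Or.inl ⟨⟨hx.1, h⟩, hx.2⟩
        · exact Or.inr (Or.inr (by simp [h]))
        · exact Or.inr (Or.inl ⟨⟨hx.1, h⟩, hx.2⟩)
      have h1 : ∫⁻ x in (U ∩ Set.Iio r) ∩ s,
          ENNReal.ofReal |(derivative P).eval x| * g (P.eval x)
          ≤ (n + 1) * ∫⁻ y in Set.Ioo (-2:ℝ) 2, g y := by
        refine ih (F.erase r) ?_ (U ∩ Set.Iio r) (hU.inter (convex_Iio r))
          (hUm.inter measurableSet_Iio) ?_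
        · rw [Finset.card_erase_of_mem (F.max'_mem hFne)]
          omega
        · intro x hx hxF
          refine hne x hx.1 fun hxF' => hxF ?_
          refine Finset.mem_erase.mpr ⟨?_, hxF'⟩
          exact ne_of_lt hx.2
      have h2 : ∫⁻ x in (U ∩ Set.Ioi r) ∩ s,
          ENNReal.ofReal |(derivative P).eval x| * g (P.eval x)
          ≤ ∫⁻ y in Set.Ioo (-2:ℝ) 2, g y := by
        refine key0 P g (U ∩ Set.Ioi r) (hU.inter (convex_Ioi r))
          (hUm.inter measurableSet_Ioi) ?_
        intro x hx
        refine hne x hx.1 fun hxF => ?_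
        exact absurd (Finset.le_max' F x hxF) (not_le.mpr hx.2)
      have h3 : ∫⁻ x in ({r} : Set ℝ),
          ENNReal.ofReal |(derivative P).eval x| * g (P.eval x) = 0 :=
        setLIntegral_measure_zero _ _ (measure_singleton r)
      calc ∫⁻ x in U ∩ s, ENNReal.ofReal |(derivative P).eval x| * g (P.eval x)
          ≤ ∫⁻ x in ((U ∩ Set.Iio r) ∩ s) ∪ (((U ∩ Set.Ioi r) ∩ s) ∪ {r}),
            ENNReal.ofReal |(derivative P).eval x| * g (P.eval x) :=
            lintegral_mono_set hsplit
        _ ≤ ((n:ENNReal) + 1) * (∫⁻ y in Set.Ioo (-2:ℝ) 2, g y)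
            + ((∫⁻ y in Set.Ioo (-2:ℝ) 2, g y) + 0) := by
            refine le_trans (lintegral_union_le _ _ _) ?_
            refine add_le_add h1 (le_trans (lintegral_union_le _ _ _) ?_)
            exact add_le_add h2 (le_of_eq h3)
        _ = ((n:ENNReal) + 1 + 1) * ∫⁻ y in Set.Ioo (-2:ℝ) 2, g y := by ring
        _ = (((n:ℕ) + 1 : ℕ) + 1 : ENNReal) * ∫⁻ y in Set.Ioo (-2:ℝ) 2, g y := by
            norm_cast


lemma rpow_anti {a b s : ℝ} (ha : 0 < a) (hab : a ≤ b) (hs : 0 ≤ s) :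
    b ^ (-s) ≤ a ^ (-s) := by
  have hb : 0 < b := lt_of_lt_of_le ha hab
  rw [Real.rpow_neg ha.le, Real.rpow_neg hb.le]
  exact inv_anti₀ (Real.rpow_pos_of_pos ha s) (Real.rpow_le_rpow ha.le hab hs)

lemma refl_eq (f : ℝ → ENNReal) :
    ∫⁻ y in Set.Ioo (-2:ℝ) 2, f (2 - y) = ∫⁻ x in Set.Ioo (0:ℝ) 4, f x := by
  have hemb : MeasurableEmbedding (fun y : ℝ => 2 - y) :=
    (MeasurableEquiv.subLeft (2:ℝ)).measurableEmbedding
  have hmp : MeasurePreserving (fun y : ℝ => 2 - y) volume volume :=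
    Measure.measurePreserving_sub_left volume 2
  have hpre : (fun y : ℝ => 2 - y) ⁻¹' Set.Ioo (0:ℝ) 4 = Set.Ioo (-2:ℝ) 2 := by
    ext y
    simp only [Set.mem_preimage, Set.mem_Ioo]
    constructor <;> intro ⟨h1, h2⟩ <;> constructor <;> linarith
  rw [← hpre]
  exact hmp.setLIntegral_comp_preimage_emb hemb f _

lemma shift_eq (f : ℝ → ENNReal) :
    ∫⁻ y in Set.Ioo (-2:ℝ) 2, f (2 + y) = ∫⁻ x in Set.Ioo (0:ℝ) 4, f x := by
  have hemb : MeasurableEmbedding (fun y : ℝ => 2 + y) :=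
    (MeasurableEquiv.addLeft (2:ℝ)).measurableEmbedding
  have hmp : MeasurePreserving (fun y : ℝ => 2 + y) volume volume :=
    measurePreserving_add_left volume 2
  have hpre : (fun y : ℝ => 2 + y) ⁻¹' Set.Ioo (0:ℝ) 4 = Set.Ioo (-2:ℝ) 2 := by
    ext y
    simp only [Set.mem_preimage, Set.mem_Ioo]
    constructor <;> intro ⟨h1, h2⟩ <;> constructor <;> linarith
  rw [← hpre]
  exact hmp.setLIntegral_comp_preimage_emb hemb f _

lemma tail_piece {t : ℝ} (ht1 : 1 < t) (ht2 : t < 2) :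
    ∫⁻ x in Set.Ioo (0:ℝ) 4, ENNReal.ofReal (x ^ (-t/2))
      ≤ ENNReal.ofReal (∫ x in Set.Ioc (0:ℝ) 4, x ^ (-t/2)) := by
  have hexp : (-1:ℝ) < -t/2 := by linarith
  have hInt : IntegrableOn (fun x : ℝ => x ^ (-t/2)) (Set.Ioc 0 4) volume :=
    (intervalIntegrable_iff_integrableOn_Ioc_of_le (by norm_num)).mp
      (intervalIntegral.intervalIntegrable_rpow' hexp)
  have hnn : 0 ≤ᵐ[volume.restrict (Set.Ioc (0:ℝ) 4)] fun x : ℝ => x ^ (-t/2) := by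
    refine (ae_restrict_iff' measurableSet_Ioc).mpr (ae_of_all _ fun x hx => ?_)
    exact Real.rpow_nonneg hx.1.le _
  rw [ofReal_integral_eq_lintegral_ofReal hInt hnn]
  exact lintegral_mono_set Set.Ioo_subset_Ioc_self

lemma g_tail {p : ℕ} (hp : 1 ≤ p) {t : ℝ} (ht1 : 1 < t) (ht2 : t < 2) :
    ∫⁻ y in Set.Ioo (-2:ℝ) 2, ENNReal.ofReal (((p:ℝ) * Real.sqrt (4 - y^2)) ^ (-t))
      ≤ ENNReal.ofReal (∫ x in Set.Ioc (0:ℝ) 4, x ^ (-t/2))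
        + ENNReal.ofReal (∫ x in Set.Ioc (0:ℝ) 4, x ^ (-t/2)) := by
  have ht0 : 0 ≤ t := by linarith
  have hp1 : (1:ℝ) ≤ (p:ℝ) := by exact_mod_cast hp
  -- pointwise bounds
  have hpos : ∀ y : ℝ, y ∈ Set.Ioo (-2:ℝ) 2 → 0 < 4 - y^2 := by
    intro y hy
    nlinarith [hy.1, hy.2]
  have bound1 : ∀ y : ℝ, y ∈ Set.Ico (0:ℝ) 2 →
      ((p:ℝ) * Real.sqrt (4 - y^2)) ^ (-t) ≤ (2 - y) ^ (-t/2) := by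
    intro y hy
    have hy4 : 0 < 4 - y^2 := by nlinarith [hy.1, hy.2]
    have h2y : 0 < 2 - y := by linarith [hy.2]
    have hle : 2 - y ≤ 4 - y^2 := by nlinarith [hy.1, hy.2]
    have hsq : Real.sqrt (2 - y) ≤ Real.sqrt (4 - y^2) := Real.sqrt_le_sqrt hle
    have hsqpos : 0 < Real.sqrt (2 - y) := Real.sqrt_pos.mpr h2y
    have hpu : Real.sqrt (4 - y^2) ≤ (p:ℝ) * Real.sqrt (4 - y^2) := by
      nlinarith [Real.sqrt_nonneg (4 - y^2)]
    have h1 : ((p:ℝ) * Real.sqrt (4 - y^2)) ^ (-t) ≤ (Real.sqrt (2 - y)) ^ (-t) :=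
      rpow_anti hsqpos (le_trans hsq hpu) ht0
    refine le_trans h1 (le_of_eq ?_)
    rw [Real.sqrt_eq_rpow, ← Real.rpow_mul h2y.le]
    congr 1
    ring
  have bound2 : ∀ y : ℝ, y ∈ Set.Ioo (-2:ℝ) 0 →
      ((p:ℝ) * Real.sqrt (4 - y^2)) ^ (-t) ≤ (2 + y) ^ (-t/2) := by
    intro y hy
    have hy4 : 0 < 4 - y^2 := by nlinarith [hy.1, hy.2]
    have h2y : 0 < 2 + y := by linarith [hy.1]
    have hle : 2 + y ≤ 4 - y^2 := by nlinarith [hy.1, hy.2]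
    have hsq : Real.sqrt (2 + y) ≤ Real.sqrt (4 - y^2) := Real.sqrt_le_sqrt hle
    have hsqpos : 0 < Real.sqrt (2 + y) := Real.sqrt_pos.mpr h2y
    have hpu : Real.sqrt (4 - y^2) ≤ (p:ℝ) * Real.sqrt (4 - y^2) := by
      nlinarith [Real.sqrt_nonneg (4 - y^2)]
    have h1 : ((p:ℝ) * Real.sqrt (4 - y^2)) ^ (-t) ≤ (Real.sqrt (2 + y)) ^ (-t) :=
      rpow_anti hsqpos (le_trans hsq hpu) ht0
    refine le_trans h1 (le_of_eq ?_)
    rw [Real.sqrt_eq_rpow, ← Real.rpow_mul h2y.le]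
    congr 1
    ring
  -- split the domain
  have hsub : Set.Ioo (-2:ℝ) 2 ⊆ Set.Ioo (-2:ℝ) 0 ∪ Set.Ico (0:ℝ) 2 := by
    intro y hy
    rcases lt_or_ge y 0 with h | h
    · exact Or.inl ⟨hy.1, h⟩
    · exact Or.inr ⟨h, hy.2⟩
  refine le_trans (lintegral_mono_set hsub) ?_
  refine le_trans (lintegral_union_le _ _ _) ?_
  rw [add_comm]
  refine add_le_add ?_ ?_
  · -- Ico 0 2 piece, bound by (2-y)^(-t/2)
    have step1 : ∫⁻ y in Set.Ico (0:ℝ) 2, ENNReal.ofReal (((p:ℝ) * Real.sqrt (4 - y^2)) ^ (-t))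
        ≤ ∫⁻ y in Set.Ico (0:ℝ) 2, ENNReal.ofReal ((2 - y) ^ (-t/2)) := by
      refine lintegral_mono_ae ?_
      refine (ae_restrict_iff' measurableSet_Ico).mpr (ae_of_all _ fun y hy => ?_)
      exact ENNReal.ofReal_le_ofReal (bound1 y hy)
    refine le_trans step1 ?_
    have step2 : ∫⁻ y in Set.Ico (0:ℝ) 2, ENNReal.ofReal ((2 - y) ^ (-t/2))
        ≤ ∫⁻ y in Set.Ioo (-2:ℝ) 2, ENNReal.ofReal ((2 - y) ^ (-t/2)) := by
      refine lintegral_mono_set fun y hy => ?_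
      exact ⟨by linarith [hy.1], hy.2⟩
    refine le_trans step2 ?_
    rw [refl_eq (fun x => ENNReal.ofReal (x ^ (-t/2)))]
    exact tail_piece ht1 ht2
  · -- Ioo (-2) 0 piece, bound by (2+y)^(-t/2)
    have step1 : ∫⁻ y in Set.Ioo (-2:ℝ) 0, ENNReal.ofReal (((p:ℝ) * Real.sqrt (4 - y^2)) ^ (-t))
        ≤ ∫⁻ y in Set.Ioo (-2:ℝ) 0, ENNReal.ofReal ((2 + y) ^ (-t/2)) := by
      refine lintegral_mono_ae ?_
      refine (ae_restrict_iff' measurableSet_Ioo).mpr (ae_of_all _ fun y hy => ?_)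
      exact ENNReal.ofReal_le_ofReal (bound2 y hy)
    refine le_trans step1 ?_
    have step2 : ∫⁻ y in Set.Ioo (-2:ℝ) 0, ENNReal.ofReal ((2 + y) ^ (-t/2))
        ≤ ∫⁻ y in Set.Ioo (-2:ℝ) 2, ENNReal.ofReal ((2 + y) ^ (-t/2)) := by
      refine lintegral_mono_set fun y hy => ?_
      exact ⟨hy.1, by linarith [hy.2]⟩
    refine le_trans step2 ?_
    rw [shift_eq (fun x => ENNReal.ofReal (x ^ (-t/2)))]
    exact tail_piece ht1 ht2

/-- For every `t ∈ (1,2)`, `p ≥ 1` and `R > 0` there is a constant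
`D = D(R,p,t)` such that for every `p`-periodic potential `V` with `‖V‖_∞ ≤ R`,
`∫_{|Δ(E)| < 2} ( |Δ'(E)| / (p √(4 - Δ(E)²)) )^t dE ≤ D`, where `Δ` is the
discriminant of `V`. (The integrand is `|dk/dE|^t` for the Floquet
quasimomentum `k` with `Δ(E) = 2 cos(kp)`.) -/
theorem statement9
    (t : ℝ) (ht : 1 < t ∧ t < 2) (p : ℕ) (hp : 1 ≤ p) (R : ℝ) (hR : 0 < R) :
    ∃ D : ℝ, ∀ V : ℤ → ℝ, (∀ n : ℤ, V (n + p) = V n) → (∀ n : ℤ, |V n| ≤ R) →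
      ∫⁻ E in {E : ℝ | |discriminant V p E| < 2},
        ENNReal.ofReal
          ((|deriv (discriminant V p) E| /
            (p * Real.sqrt (4 - discriminant V p E ^ 2))) ^ t)
        ≤ ENNReal.ofReal D := by
  obtain ⟨ht1, ht2⟩ := ht
  have hR0 : (0:ℝ) ≤ R := hR.le
  set Cc : ℝ := 2 * (2 + R) ^ p with hCc
  set K : ℝ := (p:ℝ) * Cc + 5 with hKdef
  set M : ℝ := ((p:ℝ) + 1) * ((p:ℝ) * Cc) * K ^ p with hMdef
  set Dint : ℝ := ∫ x in Set.Ioc (0:ℝ) 4, x ^ (-t/2) with hDint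
  refine ⟨M ^ (t-1) * (((p:ℝ) + 1) * (2 * Dint)), ?_⟩
  intro V _hper hbd
  set P : ℝ[X] := (polyTM V p).trace with hPdef
  -- basic positivity facts
  have hCc0 : (0:ℝ) ≤ Cc := by positivity
  have hCc2 : (2:ℝ) ≤ Cc := by
    have h1 : (1:ℝ) ≤ (2 + R) ^ p := one_le_pow₀ (by linarith)
    rw [hCc]; linarith
  have hK1 : (1:ℝ) ≤ K := by
    have : (0:ℝ) ≤ (p:ℝ) * Cc := by positivity
    rw [hKdef]; linarith
  have hK0 : (0:ℝ) ≤ K := by linarith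
  have hM0 : (0:ℝ) ≤ M := by
    rw [hMdef]; positivity
  -- coefficient bound for P
  have hPcoeff : ∀ i, |P.coeff i| ≤ Cc := by
    intro i
    rw [hPdef, Matrix.trace_fin_two, coeff_add]
    have h1 := polyTM_coeff_bound V hR0 hbd p 0 0 i
    have h2 := polyTM_coeff_bound V hR0 hbd p 1 1 i
    calc |(polyTM V p 0 0).coeff i + (polyTM V p 1 1).coeff i|
        ≤ |(polyTM V p 0 0).coeff i| + |(polyTM V p 1 1).coeff i| := abs_add_le _ _
      _ ≤ (2 + R) ^ p + (2 + R) ^ p := add_le_add h1 h2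
      _ = Cc := by rw [hCc]; ring
  -- degree facts
  obtain ⟨hmon, hdeg, _hb, _hc, hd⟩ := polyTM_deg V p hp
  have hdlt : (polyTM V p 1 1).degree < (polyTM V p 0 0).degree := by
    rw [hdeg]; exact hd
  have hPmon : P.Monic := by
    rw [hPdef, Matrix.trace_fin_two]
    exact hmon.add_of_left hdlt
  have hPdeg : P.degree = (p : WithBot ℕ) := by
    rw [hPdef, Matrix.trace_fin_two, degree_add_eq_left_of_degree_lt hdlt, hdeg]
  have hPnat : P.natDegree = p := natDegree_eq_of_degree_eq_some hPdeg
  -- discriminant = eval of P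
  have hΔ : ∀ E, discriminant V p E = P.eval E := fun E => discriminant_eval V p E
  have hΔfun : discriminant V p = fun E => P.eval E := funext hΔ
  have hΔ' : ∀ E, deriv (discriminant V p) E = (derivative P).eval E := by
    intro E
    rw [hΔfun]
    exact Polynomial.deriv (𝕜 := ℝ) (p := P) (x := E)
  -- the set rewrite
  have hset : {E : ℝ | |discriminant V p E| < 2}
      = {E : ℝ | P.eval E ∈ Set.Ioo (-2:ℝ) 2} := by
    ext E
    simp only [Set.mem_setOf_eq, hΔ, Set.mem_Ioo, abs_lt]
  set sset : Set ℝ := {E : ℝ | P.eval E ∈ Set.Ioo (-2:ℝ) 2} with hsset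
  have hssetmeas : MeasurableSet sset :=
    (isOpen_Ioo.preimage P.continuous).measurableSet
  -- derivative coefficient bound
  have hQcoeff : ∀ i, |(derivative P).coeff i| ≤ (p:ℝ) * Cc := by
    intro i
    rw [coeff_derivative]
    rcases le_or_gt (i+1) p with h | h
    · rw [abs_mul]
      have h1 : |((i:ℝ) + 1)| = (i:ℝ) + 1 := abs_of_nonneg (by positivity)
      rw [h1]
      have h2 : (i:ℝ) + 1 ≤ (p:ℝ) := by exact_mod_cast h
      calc |P.coeff (i+1)| * ((i:ℝ) + 1) ≤ Cc * (p:ℝ) :=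
            mul_le_mul (hPcoeff _) h2 (by positivity) hCc0
        _ = (p:ℝ) * Cc := mul_comm _ _
    · have h0 : P.coeff (i+1) = 0 := coeff_eq_zero_of_natDegree_lt (by omega)
      rw [h0]
      simp
      positivity
  have hQnat : (derivative P).natDegree ≤ p :=
    le_trans (natDegree_derivative_le P) (by omega)
  -- bound on |Δ'| on sset
  have hMbound : ∀ E ∈ sset, |(derivative P).eval E| ≤ M := by
    intro E hE
    have hEK : |E| ≤ K := by
      by_contra hcon
      push_neg at hcon
      have h2 : 2 < |P.eval E| :=
        eval_lower hp hPmon hPnat hPcoeff (le_of_lt (by rw [← hKdef]; exact hcon))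
      have h3 : |P.eval E| < 2 := abs_lt.mpr ⟨hE.1, hE.2⟩
      linarith
    have := eval_abs_le hQcoeff hQnat hK1 hEK
    rwa [← hMdef] at this
  -- nonvanishing of the derivative polynomial
  have hQ0 : derivative P ≠ 0 := by
    intro h
    have h1 : (derivative P).coeff (p-1) = P.coeff ((p-1)+1) * (((p-1):ℕ) + 1 : ℝ) :=
      coeff_derivative P (p-1)
    have hpp : (p-1)+1 = p := by omega
    rw [hpp] at h1
    have h2 : P.coeff p = 1 := by rw [← hPnat]; exact hPmon.coeff_natDegree
    rw [h2, one_mul, h] at h1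
    simp at h1
    have : (0:ℝ) < ((p-1):ℕ) + 1 := by positivity
    linarith [h1 ▸ this]
  set F : Finset ℝ := (derivative P).roots.toFinset with hF
  have hFcard : F.card ≤ p :=
    le_trans (Multiset.toFinset_card_le _)
      (le_trans (card_roots' _) (le_trans (natDegree_derivative_le P) (by omega)))
  have hroot : ∀ x ∈ (Set.univ : Set ℝ), x ∉ F → (derivative P).eval x ≠ 0 := by
    intro x _ hx h
    exact hx (Multiset.mem_toFinset.mpr (mem_roots'.mpr ⟨hQ0, h⟩))
  set g : ℝ → ENNReal :=
    fun y => ENNReal.ofReal (((p:ℝ) * Real.sqrt (4 - y^2)) ^ (-t)) with hg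
  -- pointwise bound
  have hpt : ∀ E ∈ sset,
      ENNReal.ofReal ((|deriv (discriminant V p) E| /
        ((p:ℝ) * Real.sqrt (4 - discriminant V p E ^ 2))) ^ t)
      ≤ ENNReal.ofReal (M ^ (t-1))
        * (ENNReal.ofReal |(derivative P).eval E| * g (P.eval E)) := by
    intro E hE
    rw [hΔ' E, hΔ E]
    set a : ℝ := |(derivative P).eval E| with ha
    set u : ℝ := (p:ℝ) * Real.sqrt (4 - P.eval E ^ 2) with hu
    have h4 : 0 < 4 - P.eval E ^ 2 := by
      have h1 := hE.1
      have h2 := hE.2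
      nlinarith
    have hppos : (0:ℝ) < (p:ℝ) := by exact_mod_cast hp
    have hupos : 0 < u := mul_pos hppos (Real.sqrt_pos.mpr h4)
    have ha0 : 0 ≤ a := abs_nonneg _
    have key1 : a ^ t ≤ M ^ (t-1) * a := by
      rcases eq_or_lt_of_le ha0 with h | h
    -- a = 0
      · rw [← h, Real.zero_rpow (by linarith : t ≠ 0), mul_zero]
      · have hrw : a ^ t = a ^ (t-1) * a := by
          rw [show t = (t-1)+1 by ring, Real.rpow_add h, Real.rpow_one]
          ring_nf
        rw [hrw]
        refine mul_le_mul_of_nonneg_right ?_ ha0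
        exact Real.rpow_le_rpow ha0 (hMbound E hE) (by linarith)
    have hreal : (a / u) ^ t ≤ M ^ (t-1) * (a * u ^ (-t)) := by
      have h1 : (a / u) ^ t = a ^ t * u ^ (-t) := by
        rw [Real.div_rpow ha0 hupos.le, Real.rpow_neg hupos.le, div_eq_mul_inv]
      rw [h1]
      calc a ^ t * u ^ (-t) ≤ (M ^ (t-1) * a) * u ^ (-t) :=
            mul_le_mul_of_nonneg_right key1 (Real.rpow_nonneg hupos.le _)
        _ = M ^ (t-1) * (a * u ^ (-t)) := by ring
    calc ENNReal.ofReal ((a / u) ^ t)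
        ≤ ENNReal.ofReal (M ^ (t-1) * (a * u ^ (-t))) := ENNReal.ofReal_le_ofReal hreal
      _ = ENNReal.ofReal (M ^ (t-1)) * (ENNReal.ofReal a * ENNReal.ofReal (u ^ (-t))) := by
          rw [ENNReal.ofReal_mul (Real.rpow_nonneg hM0 _), ENNReal.ofReal_mul ha0]
      _ = ENNReal.ofReal (M ^ (t-1)) * (ENNReal.ofReal a * g (P.eval E)) := rfl
  have hDint0 : 0 ≤ Dint := by
    rw [hDint]
    exact setIntegral_nonneg measurableSet_Ioc fun x hx => Real.rpow_nonneg hx.1.le _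
  -- main chain
  rw [hset]
  calc ∫⁻ E in sset, ENNReal.ofReal ((|deriv (discriminant V p) E| /
          ((p:ℝ) * Real.sqrt (4 - discriminant V p E ^ 2))) ^ t)
      ≤ ∫⁻ E in sset, ENNReal.ofReal (M ^ (t-1))
          * (ENNReal.ofReal |(derivative P).eval E| * g (P.eval E)) :=
        lintegral_mono_ae ((ae_restrict_iff' hssetmeas).mpr (ae_of_all _ hpt))
    _ = ENNReal.ofReal (M ^ (t-1)) * ∫⁻ E in sset,
          ENNReal.ofReal |(derivative P).eval E| * g (P.eval E) :=
        lintegral_const_mul' _ _ ENNReal.ofReal_ne_top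
    _ ≤ ENNReal.ofReal (M ^ (t-1)) * (((p:ENNReal) + 1) * ∫⁻ y in Set.Ioo (-2:ℝ) 2, g y) := by
        refine mul_le_mul_right ?_ _
        have hk := key P g p F hFcard Set.univ convex_univ MeasurableSet.univ hroot
        rwa [Set.univ_inter] at hk
    _ ≤ ENNReal.ofReal (M ^ (t-1)) * (((p:ENNReal) + 1)
          * (ENNReal.ofReal Dint + ENNReal.ofReal Dint)) := by
        refine mul_le_mul_right (mul_le_mul_right ?_ _) _
        rw [hg, hDint]
        exact g_tail hp ht1 ht2
    _ = ENNReal.ofReal (M ^ (t-1) * (((p:ℝ) + 1) * (2 * Dint))) := by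
        rw [ENNReal.ofReal_mul (Real.rpow_nonneg hM0 _)]
        congr 1
        rw [ENNReal.ofReal_mul (by positivity)]
        congr 1
        · rw [ENNReal.ofReal_add (by positivity) zero_le_one, ENNReal.ofReal_natCast,
            ENNReal.ofReal_one]
        · rw [two_mul, ENNReal.ofReal_add hDint0 hDint0]
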